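/- Let M_1, …, M_n be DFAs over a common alphabet Σ, with each accepting set F_i nonempty and every state of M_i reachable from its initial state s_i, and let G and H be the labeled graphs obtained from the first reduction construction applied to M_1, …, M_n. Then ⋃_{i=1}^n L(M_i) = Σ* if and only if ⟨G⟩ ⊆ ⟨H⟩. -/

import Mathlib

/-- A labeled graph over vertex type `V` and alphabet `A`, given by its
labeled-edge relation: `Edge p a q` means there is an edge labeled `a`
from `p` to `q`. -/
structure LabeledGraph (V A : Type) where
  Edge : V → A → V → Prop

namespace LabeledGraph

variable {V A : Type}

/-- `G.Walk p w q` : there is a (finite) path from `p` to `q` labeled `w`. -/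
def Walk (G : LabeledGraph V A) : V → List A → V → Prop
  | p, [], q => p = q
  | p, a :: w, q => ∃ r, G.Edge p a r ∧ Walk G r w q

/-- The follower set of a vertex: labels of finite paths starting at `q`. -/
def follower (G : LabeledGraph V A) (q : V) : Set (List A) :=
  { w | ∃ q', G.Walk q w q' }

/-- The transition action on sets of vertices: `S·w`. -/
def transSet (G : LabeledGraph V A) (S : Set V) (w : List A) : Set V :=
  { q' | ∃ q ∈ S, G.Walk q w q' }

/-- `G` is deterministic (right-resolving). -/
def Deterministic (G : LabeledGraph V A) : Prop :=
  ∀ p a q q', G.Edge p a q → G.Edge p a q' → q = q'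

/-- `G` is essential: every vertex has an outgoing and an incoming edge. -/
def Essential (G : LabeledGraph V A) : Prop :=
  ∀ q, (∃ a r, G.Edge q a r) ∧ (∃ a p, G.Edge p a q)

/-- The sofic shift presented by `G`: labels of bi-infinite paths. -/
def shift (G : LabeledGraph V A) : Set (ℤ → A) :=
  { x | ∃ v : ℤ → V, ∀ j : ℤ, G.Edge (v j) (x j) (v (j + 1)) }

/-- `w` is a synchronizing word for `G`: `Q_G · w` is a singleton. -/
def SyncWord (G : LabeledGraph V A) (w : List A) : Prop :=
  ∃ r, G.transSet Set.univ w = {r}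

/-- A vertex `q` is synchronizing: some word synchronizes to `q`. -/
def SyncVertex (G : LabeledGraph V A) (q : V) : Prop :=
  ∃ w, G.transSet Set.univ w = {q}

/-- `G` is synchronizing: every vertex is synchronizing. -/
def Synchronizing (G : LabeledGraph V A) : Prop :=
  ∀ q, G.SyncVertex q

/-- `G` is follower-separated. -/
def FollowerSeparated (G : LabeledGraph V A) : Prop :=
  ∀ p q, G.follower p = G.follower q → p = q

/-- `G` is irreducible (strongly connected). -/
def StronglyConnected (G : LabeledGraph V A) : Prop :=
  ∀ p q, ∃ w, G.Walk p w q

/-- `q` is reachable from `p`. -/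
def Reachable (G : LabeledGraph V A) (p q : V) : Prop :=
  ∃ w, G.Walk p w q

/-- `C` is an irreducible component: an equivalence class of mutual reachability. -/
def IsIrredComponent (G : LabeledGraph V A) (C : Set V) : Prop :=
  ∃ p, C = { q | G.Reachable p q ∧ G.Reachable q p }

/-- `C` is terminal: everything reachable from `C` lies in `C`. -/
def TerminalSet (G : LabeledGraph V A) (C : Set V) : Prop :=
  ∀ p ∈ C, ∀ q, G.Reachable p q → q ∈ C

/-- `C` is initial: everything that reaches `C` lies in `C`. -/
def InitialSet (G : LabeledGraph V A) (C : Set V) : Prop :=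
  ∀ q ∈ C, ∀ p, G.Reachable p q → p ∈ C

/-- Subgraph induced by a set `P` of vertices. -/
def induce (G : LabeledGraph V A) (P : Set V) : LabeledGraph P A where
  Edge := fun p a q => G.Edge p.1 a q.1

/-- The graph `Ĝ`: vertices are ordered pairs of distinct vertices of `G`,
with an edge labeled `a` from `(p₁,p₂)` to `(q₁,q₂)` iff `G` has edges labeled
`a` from `p₁` to `q₁` and from `p₂` to `q₂`. -/
def pairGraph (G : LabeledGraph V A) : LabeledGraph { pq : V × V // pq.1 ≠ pq.2 } A where
  Edge := fun x a y => G.Edge x.1.1 a y.1.1 ∧ G.Edge x.1.2 a y.1.2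

end LabeledGraph

/-- The word `w` appears in the bi-infinite sequence `x`. -/
def AppearsIn {A : Type} (w : List A) (x : ℤ → A) : Prop :=
  ∃ i : ℤ, ∀ n : Fin w.length, x (i + (n : ℕ)) = w.get n

/-- The language of a subset of the full shift: all finite words appearing
in some point of `X`. -/
def lang {A : Type} (X : Set (ℤ → A)) : Set (List A) :=
  { w | ∃ x ∈ X, AppearsIn w x }

/-- `X` is a shift space. -/
def IsShiftSpace {A : Type} (X : Set (ℤ → A)) : Prop :=
  ∃ F : Set (List A), X = { x | ∀ w ∈ F, ¬ AppearsIn w x }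

/-- `X` is a shift of finite type. -/
def IsSFT {A : Type} (X : Set (ℤ → A)) : Prop :=
  ∃ F : Set (List A), F.Finite ∧ X = { x | ∀ w ∈ F, ¬ AppearsIn w x }

/-- `w` is intrinsically synchronizing for `X`. -/
def IntrinsicallySync {A : Type} (X : Set (ℤ → A)) (w : List A) : Prop :=
  w ∈ lang X ∧ ∀ u v, u ++ w ∈ lang X → w ++ v ∈ lang X → u ++ (w ++ v) ∈ lang X

/-- `X` is an irreducible shift space. -/
def IrreducibleShift {A : Type} (X : Set (ℤ → A)) : Prop :=
  ∀ u ∈ lang X, ∀ v ∈ lang X, ∃ w, u ++ (w ++ v) ∈ lang X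

/-- The follower set of a word `u` in `X`. -/
def followerX {A : Type} (X : Set (ℤ → A)) (u : List A) : Set (List A) :=
  { w | u ++ w ∈ lang X }

/-- `X` is `M`-step: every word of `B(X)` of length at least `M` is
intrinsically synchronizing for `X`. -/
def MStep {A : Type} (X : Set (ℤ → A)) (M : ℕ) : Prop :=
  ∀ w ∈ lang X, M ≤ w.length → IntrinsicallySync X w

/-- A deterministic finite automaton over state type `Q` and alphabet `A`. -/
structure DFA' (Q A : Type) where
  step : Q → A → Q
  start : Q
  accept : Set Q

/-- Extended transition function. -/
def DFA'.evalFrom {Q A : Type} (M : DFA' Q A) (q : Q) (w : List A) : Q :=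
  w.foldl M.step q

/-- The language of a DFA. -/
def DFA'.lang {Q A : Type} (M : DFA' Q A) : Set (List A) :=
  { w | M.evalFrom M.start w ∈ M.accept }

/-- Alphabet `Σ ∪ {◁, ▷, *, ℓ}`. -/
inductive Sym1 (A : Type) : Type
  | letter : A → Sym1 A
  | lm : Sym1 A    -- ◁
  | rm : Sym1 A    -- ▷
  | star : Sym1 A  -- *
  | ell : Sym1 A   -- ℓ

/-- Vertices of the first reduction construction: the pre-initial states `p_i`,
the DFA states, and the two special states `p*` and `s*`. -/
inductive V1 {n : ℕ} (Q : Fin n → Type) : Type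
  | pre : Fin n → V1 Q
  | st : (i : Fin n) → Q i → V1 Q
  | pstar : V1 Q
  | sstar : V1 Q

/-- Edges of the first reduction construction. -/
inductive Red1Edge {n : ℕ} {Q : Fin n → Type} {A : Type} (M : ∀ i, DFA' (Q i) A) :
    V1 Q → Sym1 A → V1 Q → Prop
  /-- self loop labeled `*` on `p_i` -/
  | preLoop (i : Fin n) : Red1Edge M (.pre i) .star (.pre i)
  /-- the embedded DFA transitions -/
  | dfaStep (i : Fin n) (q : Q i) (a : A) :
      Red1Edge M (.st i q) (.letter a) (.st i ((M i).step q a))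
  /-- edge labeled `◁` from `p_i` to `s_i` -/
  | enter (i : Fin n) : Red1Edge M (.pre i) .lm (.st i ((M i).start))
  /-- edge labeled `▷` from each accepting state to `p_1` -/
  | exitAcc (i : Fin n) (q : Q i) (j : Fin n) :
      q ∈ (M i).accept → (j : ℕ) = 0 → Red1Edge M (.st i q) .rm (.pre j)
  /-- edge labeled `ℓ` from each state of `M_i` to `s_i` -/
  | reset (i : Fin n) (q : Q i) : Red1Edge M (.st i q) .ell (.st i ((M i).start))
  /-- self loop labeled `*` on `p*` -/
  | pstarLoop : Red1Edge M .pstar .star .pstar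
  /-- edge labeled `◁` from `p*` to `s*` -/
  | pstarEnter : Red1Edge M .pstar .lm .sstar
  /-- edge labeled `▷` from `s*` to `p_1` -/
  | sstarExit (j : Fin n) : (j : ℕ) = 0 → Red1Edge M .sstar .rm (.pre j)
  /-- self loop labeled `a` on `s*` for each `a ∈ Σ` -/
  | sstarLoop (a : A) : Red1Edge M .sstar (.letter a) .sstar
  /-- edge labeled `ℓ` from `p_i` to `p_{i+1}` for `i = 1, …, n-1` -/
  | chain (i j : Fin n) : (j : ℕ) = (i : ℕ) + 1 → Red1Edge M (.pre i) .ell (.pre j)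
  /-- edge labeled `ℓ` from `p_n` to `s*` -/
  | lastChain (i : Fin n) : (i : ℕ) + 1 = n → Red1Edge M (.pre i) .ell .sstar

/-- The labeled graph `G` of the first reduction construction. -/
def Red1 {n : ℕ} {Q : Fin n → Type} {A : Type} (M : ∀ i, DFA' (Q i) A) :
    LabeledGraph (V1 Q) (Sym1 A) where
  Edge := Red1Edge M

section Helpers

variable {n : ℕ} {Q : Fin n → Type} {A : Type} {M : ∀ i, DFA' (Q i) A}

lemma red1_inv_lm {p q : V1 Q} (h : Red1Edge M p .lm q) :
    (∃ i, p = .pre i ∧ q = .st i ((M i).start)) ∨ (p = .pstar ∧ q = .sstar) := by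
  cases h
  · exact Or.inl ⟨_, rfl, rfl⟩
  · exact Or.inr ⟨rfl, rfl⟩

lemma red1_inv_rm {p q : V1 Q} (h : Red1Edge M p .rm q) :
    (∃ i q', p = .st i q' ∧ q' ∈ (M i).accept ∧ ∃ j : Fin n, (j : ℕ) = 0 ∧ q = .pre j) ∨
      (p = .sstar ∧ ∃ j : Fin n, (j : ℕ) = 0 ∧ q = .pre j) := by
  cases h with
  | exitAcc i q j ha hj => exact Or.inl ⟨i, q, rfl, ha, j, hj, rfl⟩
  | sstarExit j hj => exact Or.inr ⟨rfl, j, hj, rfl⟩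

lemma red1_inv_letter {p q : V1 Q} {a : A} (h : Red1Edge M p (.letter a) q) :
    (∃ i q', p = .st i q' ∧ q = .st i ((M i).step q' a)) ∨ (p = .sstar ∧ q = .sstar) := by
  cases h
  · exact Or.inl ⟨_, _, rfl, rfl⟩
  · exact Or.inr ⟨rfl, rfl⟩

lemma red1_into_pstar {p : V1 Q} {a : Sym1 A} (h : Red1Edge M p a .pstar) : p = .pstar := by
  cases h; rfl

lemma red1_from_pstar {q : V1 Q} {a : Sym1 A} (h : Red1Edge M .pstar a q) :
    (a = .star ∧ q = .pstar) ∨ (a = .lm ∧ q = .sstar) := by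
  cases h
  · exact Or.inl ⟨rfl, rfl⟩
  · exact Or.inr ⟨rfl, rfl⟩

lemma red1_from_sstar {q : V1 Q} {a : Sym1 A} (h : Red1Edge M .sstar a q) :
    (∃ j : Fin n, (j : ℕ) = 0 ∧ a = .rm ∧ q = .pre j) ∨ (∃ b, a = .letter b ∧ q = .sstar) := by
  cases h with
  | sstarExit j hj => exact Or.inl ⟨j, hj, rfl, rfl⟩
  | sstarLoop b => exact Or.inr ⟨b, rfl, rfl⟩

lemma evalFrom_nil {Q' : Type} (M' : DFA' Q' A) (q : Q') : M'.evalFrom q [] = q := rfl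

lemma evalFrom_take_succ {Q' : Type} (M' : DFA' Q' A) (q : Q') (w : List A) (s : ℕ)
    (h : s < w.length) :
    M'.evalFrom q (w.take (s + 1)) = M'.step (M'.evalFrom q (w.take s)) (w.get ⟨s, h⟩) := by
  simp only [DFA'.evalFrom, List.get_eq_getElem]
  rw [List.take_succ, List.getElem?_eq_getElem h, Option.toList_some, List.foldl_append]
  rfl

/-- The word used in the forward direction. -/
def fx {A : Type} (w : List A) : ℤ → Sym1 A := fun j =>
  if h : 1 ≤ j ∧ j ≤ (w.length : ℤ) then .letter (w.get ⟨(j - 1).toNat, by omega⟩)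
  else if j = 0 then .lm
  else if j = (w.length : ℤ) + 1 then .rm
  else .star

lemma fx_neg (w : List A) (j : ℤ) (hj : j < 0) : fx w j = .star := by
  unfold fx; rw [dif_neg (by omega), if_neg (by omega), if_neg (by omega)]

lemma fx_zero (w : List A) : fx w 0 = .lm := by
  unfold fx; rw [dif_neg (by omega), if_pos rfl]

lemma fx_letter (w : List A) (s : ℕ) (hs : s < w.length) :
    fx w (1 + (s : ℕ)) = .letter (w.get ⟨s, hs⟩) := by
  unfold fx
  rw [dif_pos (by constructor <;> omega)]
  congr 1
  exact congrArg w.get (Fin.ext (by simp only [Fin.val_mk]; omega))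

lemma fx_rm (w : List A) : fx w ((w.length : ℤ) + 1) = .rm := by
  unfold fx; rw [dif_neg (by omega), if_neg (by omega), if_pos rfl]

lemma fx_big (w : List A) (j : ℤ) (hj : (w.length : ℤ) + 1 < j) : fx w j = .star := by
  unfold fx; rw [dif_neg (by omega), if_neg (by omega), if_neg (by omega)]

end Helpers

/-- Let `M_1, …, M_n` be DFAs over a common alphabet `Σ`, each with nonempty
accepting set and all states reachable from the initial state, and let `G` and
`H` be the graphs of the first reduction construction (`H` is the subgraph of
`G` induced by all vertices except `p*`). Then `⋃ᵢ L(Mᵢ) = Σ*` iff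
`⟨G⟩ ⊆ ⟨H⟩`. -/
theorem stmt10 {n : ℕ} {Q : Fin n → Type} {A : Type}
    [Fintype A] [∀ i, Fintype (Q i)] (hn : 0 < n)
    (M : ∀ i, DFA' (Q i) A)
    (hacc : ∀ i, ((M i).accept).Nonempty)
    (hreach : ∀ i (q : Q i), ∃ w, (M i).evalFrom (M i).start w = q) :
    (⋃ i, (M i).lang) = Set.univ ↔
      (Red1 M).shift ⊆ ((Red1 M).induce {v | v ≠ V1.pstar}).shift := by
  constructor
  · -- union = Σ* implies ⟨G⟩ ⊆ ⟨H⟩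
    intro hU x hx
    obtain ⟨v, hv⟩ := hx
    have hUw : ∀ w : List A, ∃ i, (M i).evalFrom (M i).start w ∈ (M i).accept := by
      intro w
      have hw : w ∈ ⋃ i, (M i).lang := hU ▸ Set.mem_univ w
      simpa [DFA'.lang, Set.mem_iUnion] using hw
    have hstep : ∀ j, v (j + 1) = V1.pstar → v j = V1.pstar := by
      intro j h
      exact red1_into_pstar (h ▸ hv j)
    have hdownN : ∀ (t : ℕ) (j : ℤ), v (j + (t : ℤ)) = V1.pstar → v j = V1.pstar := by
      intro t
      induction t with
      | zero => intro j h; simpa using h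
      | succ t ih =>
        intro j h
        apply ih
        apply hstep
        have e : j + (t : ℤ) + 1 = j + (((t : ℕ) + 1 : ℕ) : ℤ) := by push_cast; ring
        rw [e]; exact h
    have hdown : ∀ j j' : ℤ, j ≤ j' → v j' = V1.pstar → v j = V1.pstar := by
      intro j j' hle h
      have e : j + (((j' - j).toNat : ℕ) : ℤ) = j' := by omega
      exact hdownN _ j (by rw [e]; exact h)
    have hfwd : ∀ j j' : ℤ, j ≤ j' → v j ≠ V1.pstar → v j' ≠ V1.pstar := by
      intro j j' hle h hc
      exact h (hdown j j' hle hc)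
    by_cases hp : ∀ j, v j ≠ V1.pstar
    · exact ⟨fun j => ⟨v j, hp j⟩, fun j => hv j⟩
    push_neg at hp
    obtain ⟨j0, hj0⟩ := hp
    by_cases hall : ∀ j, v j = V1.pstar
    · -- all-star point
      have hxs : ∀ j, x j = Sym1.star := by
        intro j
        have h := hv j
        rw [hall j] at h
        rcases red1_from_pstar h with ⟨ha, _⟩ | ⟨_, hq⟩
        · exact ha
        · rw [hall (j + 1)] at hq; cases hq
      refine ⟨fun _ => ⟨V1.pre ⟨0, hn⟩, by intro hc; cases hc⟩, fun j => ?_⟩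
      show Red1Edge M (V1.pre ⟨0, hn⟩) (x j) (V1.pre ⟨0, hn⟩)
      rw [hxs j]
      exact .preLoop _
    push_neg at hall
    obtain ⟨m0, hm0⟩ := hall
    have hex : ∃ k, v k = V1.pstar ∧ v (k + 1) ≠ V1.pstar := by
      by_contra hc
      push_neg at hc
      have hupN : ∀ t : ℕ, v (j0 + (t : ℤ)) = V1.pstar := by
        intro t
        induction t with
        | zero => simpa using hj0
        | succ t ih =>
          have e : j0 + (((t : ℕ) + 1 : ℕ) : ℤ) = (j0 + (t : ℤ)) + 1 := by push_cast; ring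
          rw [e]; exact hc _ ih
      apply hm0
      rcases le_or_gt m0 j0 with h | h
      · exact hdown _ _ h hj0
      · have e : j0 + (((m0 - j0).toNat : ℕ) : ℤ) = m0 := by omega
        rw [← e]; exact hupN _
    obtain ⟨k, hk, hk1⟩ := hex
    have hek := hv k
    rw [hk] at hek
    rcases red1_from_pstar hek with ⟨_, hq⟩ | ⟨hxk, hks⟩
    · exact absurd hq hk1
    have hleft : ∀ j, j < k → x j = Sym1.star := by
      intro j hj
      have h := hv j
      rw [hdown j k (by omega) hk] at h
      rcases red1_from_pstar h with ⟨ha, _⟩ | ⟨_, hq⟩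
      · exact ha
      · rw [hdown (j + 1) k (by omega) hk] at hq; cases hq
    by_cases hs : ∀ j, k + 1 ≤ j → v j = V1.sstar
    · -- stays at s* forever : labels are letters
      have hlet : ∀ j, k + 1 ≤ j → ∃ b, x j = Sym1.letter b := by
        intro j hj
        have h := hv j
        rw [hs j hj] at h
        rcases red1_from_sstar h with ⟨j1, _, _, hq⟩ | ⟨b, hb, _⟩
        · rw [hs (j + 1) (by omega)] at hq; cases hq
        · exact ⟨b, hb⟩
      choose bb hbb using hlet
      let run : ℕ → Q ⟨0, hn⟩ := fun s =>
        Nat.rec ((M ⟨0, hn⟩).start)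
          (fun t qt => (M ⟨0, hn⟩).step qt (bb (k + 1 + (t : ℤ)) (by omega))) s
      let u0 : ℤ → V1 Q := fun j =>
        if j ≤ k then V1.pre ⟨0, hn⟩ else V1.st ⟨0, hn⟩ (run (j - (k + 1)).toNat)
      have hne : ∀ j, u0 j ≠ V1.pstar := by
        intro j
        simp only [u0]
        split <;> (intro hc; cases hc)
      refine ⟨fun j => ⟨u0 j, hne j⟩, fun j => ?_⟩
      show Red1Edge M (u0 j) (x j) (u0 (j + 1))
      rcases lt_trichotomy j k with hj | hj | hj
      · have e1 : u0 j = V1.pre ⟨0, hn⟩ := if_pos (by omega)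
        have e2 : u0 (j + 1) = V1.pre ⟨0, hn⟩ := if_pos (by omega)
        rw [e1, e2, hleft j hj]
        exact .preLoop _
      · subst hj
        have e1 : u0 j = V1.pre ⟨0, hn⟩ := if_pos le_rfl
        have e2 : u0 (j + 1) = V1.st ⟨0, hn⟩ (run 0) := by
          simp only [u0]
          rw [if_neg (by omega), show (j + 1 - (j + 1)).toNat = 0 by omega]
        rw [e1, e2, hxk]
        exact .enter _
      · obtain ⟨s, rfl⟩ : ∃ s : ℕ, j = k + 1 + (s : ℤ) := ⟨(j - (k + 1)).toNat, by omega⟩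
        have e1 : u0 (k + 1 + (s : ℤ)) = V1.st ⟨0, hn⟩ (run s) := by
          simp only [u0]
          rw [if_neg (by omega), show (k + 1 + (s : ℤ) - (k + 1)).toNat = s by omega]
        have e2 : u0 (k + 1 + (s : ℤ) + 1) = V1.st ⟨0, hn⟩ (run (s + 1)) := by
          simp only [u0]
          rw [if_neg (by omega), show (k + 1 + (s : ℤ) + 1 - (k + 1)).toNat = s + 1 by omega]
        rw [e1, e2, hbb (k + 1 + (s : ℤ)) (by omega)]
        exact .dfaStep _ (run s) _
    · -- leaves s* : the word read must be accepted by some Mᵢ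
      push_neg at hs
      obtain ⟨m0', hm0'le, hm0'⟩ := hs
      haveI : DecidablePred (fun t : ℕ => v (k + 1 + (t : ℤ)) ≠ V1.sstar) :=
        Classical.decPred _
      have hT : ∃ t : ℕ, v (k + 1 + (t : ℤ)) ≠ V1.sstar :=
        ⟨(m0' - (k + 1)).toNat, by
          rw [show k + 1 + (((m0' - (k + 1)).toNat : ℕ) : ℤ) = m0' by omega]; exact hm0'⟩
      have ht1spec := Nat.find_spec hT
      have ht1pos : 0 < Nat.find hT := by
        by_contra h
        have h0 : Nat.find hT = 0 := by omega
        rw [h0] at ht1spec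
        apply ht1spec
        simpa using hks
      set t0 : ℕ := Nat.find hT - 1 with ht0def
      have hmid : ∀ s : ℕ, s ≤ t0 → v (k + 1 + (s : ℤ)) = V1.sstar := by
        intro s hsle
        by_contra hc
        exact (Nat.find_min hT (show s < Nat.find hT by omega)) hc
      have hm1 : v (k + 1 + (t0 : ℤ) + 1) ≠ V1.sstar := by
        rw [show k + 1 + (t0 : ℤ) + 1 = k + 1 + ((Nat.find hT : ℕ) : ℤ) by omega]
        exact ht1spec
      have hem := hv (k + 1 + (t0 : ℤ))
      rw [hmid t0 le_rfl] at hem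
      rcases red1_from_sstar hem with ⟨j1, hj1, hxm, hvm1⟩ | ⟨b, _, hq⟩
      swap
      · exact absurd hq hm1
      have hlet : ∀ s : ℕ, s < t0 → ∃ b, x (k + 1 + (s : ℤ)) = Sym1.letter b := by
        intro s hsl
        have h := hv (k + 1 + (s : ℤ))
        rw [hmid s (by omega)] at h
        rcases red1_from_sstar h with ⟨j2, _, _, hq⟩ | ⟨b, hb, _⟩
        · exfalso
          have hnext : v (k + 1 + (s : ℤ) + 1) = V1.sstar := by
            rw [show k + 1 + (s : ℤ) + 1 = k + 1 + (((s + 1 : ℕ) : ℕ) : ℤ) by push_cast; ring]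
            exact hmid (s + 1) (by omega)
          rw [hq] at hnext; cases hnext
        · exact ⟨b, hb⟩
      choose bb hbb using hlet
      let w : List A := List.ofFn (fun s : Fin t0 => bb s s.2)
      have hwlen : w.length = t0 := List.length_ofFn
      have hget : ∀ (s : ℕ) (h1 : s < t0),
          w.get ⟨s, by rw [hwlen]; exact h1⟩ = bb s h1 := by
        intro s h1
        simp only [w]
        simp [List.get_ofFn]
      obtain ⟨i, hi⟩ := hUw w
      have hnep : ∀ j, k + 1 + (t0 : ℤ) + 1 ≤ j → v j ≠ V1.pstar := by
        intro j hj
        apply hfwd (k + 1 + (t0 : ℤ) + 1) j hj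
        rw [hvm1]; intro hc; cases hc
      let u0 : ℤ → V1 Q := fun j =>
        if j ≤ k then V1.pre i
        else if j ≤ k + 1 + (t0 : ℤ) then
          V1.st i ((M i).evalFrom (M i).start (w.take (j - (k + 1)).toNat))
        else v j
      have hne : ∀ j, u0 j ≠ V1.pstar := by
        intro j
        simp only [u0]
        by_cases h1 : j ≤ k
        · rw [if_pos h1]; intro hc; cases hc
        by_cases h2 : j ≤ k + 1 + (t0 : ℤ)
        · rw [if_neg h1, if_pos h2]; intro hc; cases hc
        · rw [if_neg h1, if_neg h2]; exact hnep j (by omega)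
      refine ⟨fun j => ⟨u0 j, hne j⟩, fun j => ?_⟩
      show Red1Edge M (u0 j) (x j) (u0 (j + 1))
      rcases lt_trichotomy j k with hj | hj | hj
      · have e1 : u0 j = V1.pre i := if_pos (by omega)
        have e2 : u0 (j + 1) = V1.pre i := if_pos (by omega)
        rw [e1, e2, hleft j hj]
        exact .preLoop _
      · subst hj
        have e1 : u0 j = V1.pre i := if_pos le_rfl
        have e2 : u0 (j + 1) = V1.st i ((M i).start) := by
          simp only [u0]
          rw [if_neg (by omega), if_pos (by omega),
            show (j + 1 - (j + 1)).toNat = 0 by omega]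
          rfl
        rw [e1, e2, hxk]
        exact .enter _
      rcases lt_trichotomy j (k + 1 + (t0 : ℤ)) with hj2 | hj2 | hj2
      · obtain ⟨s, hslt, rfl⟩ : ∃ s : ℕ, s < t0 ∧ j = k + 1 + (s : ℤ) :=
          ⟨(j - (k + 1)).toNat, by omega, by omega⟩
        have e1 : u0 (k + 1 + (s : ℤ)) =
            V1.st i ((M i).evalFrom (M i).start (w.take s)) := by
          simp only [u0]
          rw [if_neg (by omega), if_pos (by omega),
            show (k + 1 + (s : ℤ) - (k + 1)).toNat = s by omega]
        have e2 : u0 (k + 1 + (s : ℤ) + 1) =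
            V1.st i ((M i).evalFrom (M i).start (w.take (s + 1))) := by
          simp only [u0]
          rw [if_neg (by omega), if_pos (by omega),
            show (k + 1 + (s : ℤ) + 1 - (k + 1)).toNat = s + 1 by omega]
        have hsw : s < w.length := by rw [hwlen]; exact hslt
        have etake := evalFrom_take_succ (M i) ((M i).start) w s hsw
        rw [hget s hslt] at etake
        rw [e1, e2, hbb s hslt, etake]
        exact .dfaStep _ _ _
      · subst hj2
        have e1 : u0 (k + 1 + (t0 : ℤ)) = V1.st i ((M i).evalFrom (M i).start w) := by
          simp only [u0]
          rw [if_neg (by omega), if_pos (by omega),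
            show (k + 1 + (t0 : ℤ) - (k + 1)).toNat = t0 by omega, ← hwlen,
            List.take_length]
        have e2 : u0 (k + 1 + (t0 : ℤ) + 1) = V1.pre j1 := by
          simp only [u0]
          rw [if_neg (by omega), if_neg (by omega)]
          exact hvm1
        rw [e1, e2, hxm]
        exact .exitAcc i _ j1 hi hj1
      · have e1 : u0 j = v j := by
          simp only [u0]
          rw [if_neg (by omega), if_neg (by omega)]
        have e2 : u0 (j + 1) = v (j + 1) := by
          simp only [u0]
          rw [if_neg (by omega), if_neg (by omega)]
        rw [e1, e2]
        exact hv j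
  · -- ⟨G⟩ ⊆ ⟨H⟩ implies union = Σ*
    intro hsub
    apply Set.eq_univ_of_forall
    intro w
    rw [Set.mem_iUnion]
    have hxG : fx w ∈ (Red1 M).shift := by
      let vg : ℤ → V1 Q := fun j => if j ≤ 0 then V1.pstar
        else if j ≤ (w.length : ℤ) + 1 then V1.sstar else V1.pre ⟨0, hn⟩
      refine ⟨vg, fun j => ?_⟩
      show Red1Edge M (vg j) (fx w j) (vg (j + 1))
      simp only [vg]
      rcases lt_trichotomy j 0 with hj | hj | hj
      · rw [if_pos (by omega : j ≤ 0), if_pos (by omega : j + 1 ≤ 0), fx_neg w j hj]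
        exact .pstarLoop
      · subst hj
        rw [if_pos (le_refl (0:ℤ)), if_neg (by omega : ¬ (0 : ℤ) + 1 ≤ 0),
          if_pos (by omega : (0 : ℤ) + 1 ≤ (w.length : ℤ) + 1), fx_zero]
        exact .pstarEnter
      rcases lt_trichotomy j ((w.length : ℤ) + 1) with hj2 | hj2 | hj2
      · obtain ⟨s, hslt, rfl⟩ : ∃ s : ℕ, s < w.length ∧ j = 1 + (s : ℤ) :=
          ⟨(j - 1).toNat, by omega, by omega⟩
        rw [if_neg (by omega), if_pos (by omega), if_neg (by omega), if_pos (by omega),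
          fx_letter w s hslt]
        exact .sstarLoop _
      · subst hj2
        rw [if_neg (by omega), if_pos (le_refl ((w.length : ℤ) + 1)), if_neg (by omega),
          if_neg (by omega), fx_rm]
        exact .sstarExit ⟨0, hn⟩ rfl
      · rw [if_neg (by omega), if_neg (by omega), if_neg (by omega), if_neg (by omega),
          fx_big w j hj2]
        exact .preLoop _
    obtain ⟨v', hv'⟩ := hsub hxG
    have hE : ∀ j, Red1Edge M (v' j).1 (fx w j) (v' (j + 1)).1 := fun j => hv' j
    have hNP : ∀ j, (v' j).1 ≠ V1.pstar := fun j => (v' j).2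
    have h0 := hE 0
    rw [fx_zero] at h0
    rcases red1_inv_lm h0 with ⟨i, hp0, hp1⟩ | ⟨hp0, _⟩
    swap
    · exact absurd hp0 (hNP 0)
    have hclaim : ∀ s : ℕ, s ≤ w.length →
        (v' (1 + (s : ℤ))).1 = V1.st i ((M i).evalFrom (M i).start (w.take s)) := by
      intro s
      induction s with
      | zero => intro _; simpa [DFA'.evalFrom] using hp1
      | succ s ih =>
        intro hsle
        have hsl : s < w.length := by omega
        have h := hE (1 + (s : ℤ))
        rw [fx_letter w s hsl] at h
        rcases red1_inv_letter h with ⟨i', q', he1, he2⟩ | ⟨he1, _⟩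
        swap
        · rw [ih (by omega)] at he1; cases he1
        · rw [ih (by omega)] at he1
          injection he1 with h1 h2
          subst h1
          have h2' := eq_of_heq h2
          rw [← h2'] at he2
          rw [show (1 : ℤ) + (((s + 1 : ℕ) : ℕ) : ℤ) = 1 + (s : ℤ) + 1 by push_cast; ring,
            evalFrom_take_succ (M i) ((M i).start) w s hsl]
          exact he2
    have hlast := hE (1 + (w.length : ℤ))
    rw [show (1 : ℤ) + (w.length : ℤ) = (w.length : ℤ) + 1 by ring, fx_rm] at hlast
    have hcl := hclaim w.length le_rfl
    rw [List.take_length,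
      show (1 : ℤ) + (w.length : ℤ) = (w.length : ℤ) + 1 by ring] at hcl
    rcases red1_inv_rm hlast with ⟨i', q', he1, hacc', _⟩ | ⟨he1, _⟩
    · rw [hcl] at he1
      injection he1 with h1 h2
      subst h1
      rw [← eq_of_heq h2] at hacc'
      exact ⟨i, hacc'⟩
    · rw [hcl] at he1; cases he1
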